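/- If f ∈ A satisfies |z²·f''(z) + z·f'(z) − f(z)| < 3/2 for all z ∈ 𝔻, then f ∈ Ω. -/

import Mathlib

open Complex Metric

/-- The open unit disc in `ℂ`. -/
def unitDisc : Set ℂ := Metric.ball 0 1

/-- `f ∈ 𝒜ₙ`: `f` is analytic on the unit disc with power series
`f(z) = z + ∑_{k=n+1}^∞ a_k z^k`. -/
def MemA (n : ℕ) (f : ℂ → ℂ) : Prop :=
  DifferentiableOn ℂ f unitDisc ∧
    ∃ a : ℕ → ℂ, ∀ z ∈ unitDisc, f z = z + ∑' k : ℕ, a k * z ^ (n + 1 + k)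

/-- `f ∈ Ωₙ`: `f ∈ 𝒜ₙ` and `|z f'(z) - f(z)| < 1/2` on the unit disc. -/
def MemOmega (n : ℕ) (f : ℂ → ℂ) : Prop :=
  MemA n f ∧ ∀ z ∈ unitDisc, ‖z * deriv f z - f z‖ < 1 / 2

theorem stmt_2 (f : ℂ → ℂ)
    (hf : MemA 1 f)
    (h : ∀ z ∈ unitDisc, ‖z ^ 2 * deriv (deriv f) z + z * deriv f z - f z‖ < 3 / 2) :
    MemOmega 1 f := by
  refine ⟨hf, ?_⟩
  obtain ⟨hdiff, a, ha⟩ := hf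
  have hs : IsOpen unitDisc := isOpen_ball
  have h0s : (0 : ℂ) ∈ unitDisc := mem_ball_self one_pos
  have hf0 : f 0 = 0 := by
    have := ha 0 h0s
    simpa using this
  have hA : AnalyticOnNhd ℂ f unitDisc := hdiff.analyticOnNhd hs
  have hA' : AnalyticOnNhd ℂ (deriv f) unitDisc := hA.deriv
  have hA'' : AnalyticOnNhd ℂ (deriv (deriv f)) unitDisc := hA'.deriv
  set F : ℂ → ℂ := fun w => w ^ 2 * deriv f w - w * f w with hFdef
  have hFA : AnalyticOnNhd ℂ F unitDisc := by
    exact (((analyticOnNhd_id).pow 2).mul hA').sub ((analyticOnNhd_id).mul hA)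
  have hF0 : F 0 = 0 := by simp [hFdef]
  have hderivF : ∀ z ∈ unitDisc,
      HasDerivAt F (z ^ 2 * deriv (deriv f) z + z * deriv f z - f z) z := by
    intro z hz
    have h1 : HasDerivAt f (deriv f z) z := (hA z hz).differentiableAt.hasDerivAt
    have h2 : HasDerivAt (deriv f) (deriv (deriv f) z) z :=
      (hA' z hz).differentiableAt.hasDerivAt
    have hp : HasDerivAt (fun w : ℂ => w ^ 2) (2 * z) z := by
      simpa using hasDerivAt_pow 2 z
    have := (hp.mul h2).sub ((hasDerivAt_id z).mul h1)
    refine this.congr_deriv ?_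
    simp only [id_eq]
    ring
  have hderivF_eq : ∀ z ∈ unitDisc,
      deriv F z = z ^ 2 * deriv (deriv f) z + z * deriv f z - f z :=
    fun z hz => (hderivF z hz).deriv
  have hbound : ∀ z ∈ unitDisc, ‖deriv F z‖ < 3 / 2 := by
    intro z hz
    rw [hderivF_eq z hz]
    exact h z hz
  have hF'0 : deriv F 0 = 0 := by
    rw [hderivF_eq 0 h0s]
    simp [hf0]
  have hF''0 : deriv (deriv F) 0 = 0 := by
    have hev : deriv F =ᶠ[nhds (0 : ℂ)]
        fun z => z ^ 2 * deriv (deriv f) z + z * deriv f z - f z :=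
      Filter.eventuallyEq_of_mem (hs.mem_nhds h0s) hderivF_eq
    rw [hev.deriv_eq]
    have h1 : HasDerivAt f (deriv f 0) 0 := (hA 0 h0s).differentiableAt.hasDerivAt
    have h2 : HasDerivAt (deriv f) (deriv (deriv f) 0) 0 :=
      (hA' 0 h0s).differentiableAt.hasDerivAt
    have h3 : HasDerivAt (deriv (deriv f)) (deriv (deriv (deriv f)) 0) 0 :=
      (hA'' 0 h0s).differentiableAt.hasDerivAt
    have hp : HasDerivAt (fun w : ℂ => w ^ 2) (2 * (0 : ℂ)) 0 := by
      simpa using hasDerivAt_pow 2 (0 : ℂ)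
    have H : HasDerivAt
        (fun z : ℂ => z ^ 2 * deriv (deriv f) z + z * deriv f z - f z) 0 0 := by
      have := ((hp.mul h3).add ((hasDerivAt_id (0 : ℂ)).mul h2)).sub h1
      refine this.congr_deriv ?_
      simp
    exact H.deriv
  have hFdiff : DifferentiableOn ℂ F unitDisc := hFA.differentiableOn
  have hF'A : AnalyticOnNhd ℂ (deriv F) unitDisc := hFA.deriv
  have hF'diff : DifferentiableOn ℂ (deriv F) unitDisc := hF'A.differentiableOn
  -- Schwarz lemma step 1
  have hmaps : Set.MapsTo (deriv F) (ball (0 : ℂ) 1) (ball (deriv F 0) (3 / 2)) := by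
    intro z hz
    rw [hF'0, mem_ball_zero_iff]
    exact hbound z hz
  have hψle : ∀ z ∈ unitDisc, ‖dslope (deriv F) 0 z‖ ≤ 3 / 2 := by
    intro z hz
    have := Complex.norm_dslope_le_div_of_mapsTo_ball hF'diff (hmaps.mono_right ball_subset_closedBall) hz
    simpa using this
  have hψ0 : dslope (deriv F) 0 0 = 0 := by
    rw [dslope_same]
    exact hF''0
  have hψdiff : DifferentiableOn ℂ (dslope (deriv F) 0) unitDisc :=
    (differentiableOn_dslope (hs.mem_nhds h0s)).mpr hF'diff
  -- Schwarz lemma step 2, with an ε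
  have hψle2 : ∀ z ∈ unitDisc, ‖dslope (deriv F) 0 z‖ ≤ 3 / 2 * ‖z‖ := by
    intro z hz
    rcases eq_or_ne z 0 with rfl | hz0
    · rw [hψ0]; simp
    have key : ∀ ε : ℝ, 0 < ε → ‖dslope (deriv F) 0 z‖ ≤ (3 / 2 + ε) * ‖z‖ := by
      intro ε hε
      have hmaps2 : Set.MapsTo (dslope (deriv F) 0) (ball (0 : ℂ) 1)
          (ball (dslope (deriv F) 0 0) (3 / 2 + ε)) := by
        intro w hw
        rw [hψ0, mem_ball_zero_iff]
        exact lt_of_le_of_lt (hψle w hw) (by linarith)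
      have := Complex.dist_le_div_mul_dist_of_mapsTo_ball hψdiff (hmaps2.mono_right ball_subset_closedBall) hz
      rw [hψ0] at this
      simpa [dist_zero_right] using this
    have : ∀ ε : ℝ, 0 < ε → ‖dslope (deriv F) 0 z‖ ≤ 3 / 2 * ‖z‖ + ε := by
      intro ε hε
      have hz0' : 0 < ‖z‖ := norm_pos_iff.mpr hz0
      have := key (ε / ‖z‖) (by positivity)
      calc ‖dslope (deriv F) 0 z‖ ≤ (3 / 2 + ε / ‖z‖) * ‖z‖ := this
        _ = 3 / 2 * ‖z‖ + ε := by rw [add_mul, div_mul_cancel₀ _ hz0'.ne']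
    linarith [le_of_forall_pos_le_add this]
  -- hence the quadratic bound on `deriv F`
  have hF'bound : ∀ w ∈ unitDisc, ‖deriv F w‖ ≤ 3 / 2 * ‖w‖ ^ 2 := by
    intro w hw
    have hsl := sub_smul_dslope (deriv F) 0 w
    rw [sub_zero, hF'0, sub_zero] at hsl
    calc ‖deriv F w‖ = ‖w • dslope (deriv F) 0 w‖ := by rw [hsl]
      _ = ‖w‖ * ‖dslope (deriv F) 0 w‖ := by rw [norm_smul]
      _ ≤ ‖w‖ * (3 / 2 * ‖w‖) := by
          exact mul_le_mul_of_nonneg_left (hψle2 w hw) (norm_nonneg w)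
      _ = 3 / 2 * ‖w‖ ^ 2 := by ring
  -- now integrate along the segment
  intro z hz
  rcases eq_or_ne z 0 with rfl | hz0
  · simp [hf0]
  have hznorm : ‖z‖ < 1 := mem_ball_zero_iff.mp hz
  have hmem : ∀ t : ℝ, t ∈ Set.uIcc (0 : ℝ) 1 → (t : ℂ) * z ∈ unitDisc := by
    intro t ht
    rw [Set.uIcc_of_le (by norm_num : (0:ℝ) ≤ 1)] at ht
    have h1 : ‖(t : ℂ) * z‖ = |t| * ‖z‖ := by
      rw [norm_mul, Complex.norm_real, Real.norm_eq_abs]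
    rw [unitDisc, mem_ball_zero_iff, h1]
    have : |t| ≤ 1 := abs_le.mpr ⟨by linarith [ht.1], ht.2⟩
    nlinarith [norm_nonneg z, abs_nonneg t]
  have hderivu : ∀ t ∈ Set.uIcc (0 : ℝ) 1,
      HasDerivAt (fun t : ℝ => F ((t : ℂ) * z)) (z * deriv F ((t : ℂ) * z)) t := by
    intro t ht
    have h1 : HasDerivAt (fun t : ℝ => (t : ℂ) * z) z t := by
      simpa using (Complex.ofRealCLM.hasDerivAt (x := t)).mul_const z
    have h2 : HasDerivAt F (deriv F ((t : ℂ) * z)) ((t : ℂ) * z) :=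
      (hFA _ (hmem t ht)).differentiableAt.hasDerivAt
    have := h2.scomp t h1
    simpa [smul_eq_mul, Function.comp_def] using this
  have hcont : ContinuousOn (fun t : ℝ => z * deriv F ((t : ℂ) * z)) (Set.uIcc 0 1) := by
    apply continuousOn_const.mul
    apply hF'diff.continuousOn.comp
    · exact (Complex.continuous_ofReal.mul continuous_const).continuousOn
    · exact hmem
  have hint : IntervalIntegrable (fun t : ℝ => z * deriv F ((t : ℂ) * z))
      MeasureTheory.volume 0 1 := hcont.intervalIntegrable
  have heq : ∫ t in (0 : ℝ)..1, z * deriv F ((t : ℂ) * z) = F z := by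
    rw [intervalIntegral.integral_eq_sub_of_hasDerivAt
      (fun t ht => hderivu t ht) hint]
    simp [hF0]
  have hptbound : ∀ t ∈ Set.uIcc (0 : ℝ) 1,
      ‖z * deriv F ((t : ℂ) * z)‖ ≤ 3 / 2 * ‖z‖ ^ 3 * t ^ 2 := by
    intro t ht
    rw [Set.uIcc_of_le (by norm_num : (0:ℝ) ≤ 1)] at ht
    have h1 : ‖(t : ℂ) * z‖ = t * ‖z‖ := by
      rw [norm_mul, Complex.norm_real, Real.norm_eq_abs, _root_.abs_of_nonneg ht.1]
    have h2 := hF'bound _ (hmem t (by rw [Set.uIcc_of_le (by norm_num : (0:ℝ) ≤ 1)]; exact ht))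
    rw [h1] at h2
    calc ‖z * deriv F ((t : ℂ) * z)‖ = ‖z‖ * ‖deriv F ((t : ℂ) * z)‖ := norm_mul _ _
      _ ≤ ‖z‖ * (3 / 2 * (t * ‖z‖) ^ 2) := mul_le_mul_of_nonneg_left h2 (norm_nonneg z)
      _ = 3 / 2 * ‖z‖ ^ 3 * t ^ 2 := by ring
  have hFz : ‖F z‖ ≤ ‖z‖ ^ 3 / 2 := by
    have hgint : IntervalIntegrable (fun t : ℝ => 3 / 2 * ‖z‖ ^ 3 * t ^ 2)
        MeasureTheory.volume 0 1 := by
      apply ContinuousOn.intervalIntegrable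
      fun_prop
    have hae : ∀ᵐ t : ℝ ∂(MeasureTheory.volume.restrict (Set.uIoc (0:ℝ) 1)),
        ‖z * deriv F ((t : ℂ) * z)‖ ≤ 3 / 2 * ‖z‖ ^ 3 * t ^ 2 := by
      filter_upwards [MeasureTheory.ae_restrict_mem measurableSet_uIoc] with t ht
      exact hptbound t (Set.uIoc_subset_uIcc ht)
    have hle := intervalIntegral.norm_integral_le_abs_of_norm_le hae hgint
    rw [heq] at hle
    have hval : (∫ t in (0:ℝ)..1, 3 / 2 * ‖z‖ ^ 3 * t ^ 2) = ‖z‖ ^ 3 / 2 := by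
      rw [intervalIntegral.integral_const_mul, integral_pow]
      norm_num
      ring
    rw [hval, _root_.abs_of_nonneg (by positivity)] at hle
    exact hle
  -- conclude
  have hFactor : F z = z * (z * deriv f z - f z) := by
    simp only [hFdef]
    ring
  have hzpos : 0 < ‖z‖ := norm_pos_iff.mpr hz0
  have hkey : ‖z‖ * ‖z * deriv f z - f z‖ ≤ ‖z‖ * (‖z‖ ^ 2 / 2) := by
    rw [← norm_mul, ← hFactor]
    calc ‖F z‖ ≤ ‖z‖ ^ 3 / 2 := hFz
      _ = ‖z‖ * (‖z‖ ^ 2 / 2) := by ring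
  have h1 : ‖z * deriv f z - f z‖ ≤ ‖z‖ ^ 2 / 2 := le_of_mul_le_mul_left hkey hzpos
  have h2 : ‖z‖ ^ 2 / 2 < 1 / 2 := by nlinarith [norm_nonneg z]
  linarith
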